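/- If α ⊆ ℝ^d is a floral arrangement determined by a signed SPD (Δ,s) with k edges, then τ_d(α) (the sum of signs of occupied orthants) equals τ(Δ,s) if k = d, and equals 0 if k < d. -/
import Mathlib


open scoped BigOperators

/-- A signed, edge-labeled series-parallel diagram with labels in `Fin d`. -/
inductive LSPD (d : ℕ) : Type
  | edge (i : Fin d) (sign : Bool)
  | series (a b : LSPD d)
  | parallel (a b : LSPD d)

namespace LSPD

variable {d : ℕ}

/-- the set of edge labels used -/
def edges : LSPD d → Finset (Fin d)
  | edge i _ => {i}
  | series a b => a.edges ∪ b.edges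
  | parallel a b => a.edges ∪ b.edges

/-- read-once: every variable (edge label) is used at most once -/
def ReadOnce : LSPD d → Prop
  | edge _ _ => True
  | series a b => a.ReadOnce ∧ b.ReadOnce ∧ Disjoint a.edges b.edges
  | parallel a b => a.ReadOnce ∧ b.ReadOnce ∧ Disjoint a.edges b.edges

/-- total number of edges -/
def numEdges : LSPD d → ℕ
  | edge _ _ => 1
  | series a b => a.numEdges + b.numEdges
  | parallel a b => a.numEdges + b.numEdges

/-- the floral arrangement: series = intersection, parallel = union,
    the edge `i` with sign `±` is the half-space `±H_i = {x : ±x_i ≥ 0}` -/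
def toSet : LSPD d → Set (Fin d → ℝ)
  | edge i s => {x | if s then 0 ≤ x i else x i ≤ 0}
  | series a b => a.toSet ∩ b.toSet
  | parallel a b => a.toSet ∪ b.toSet

/-- signed volume `τ`: 1 on a positive edge, multiplicative under series
    connection, and `τ(Δ̄,-s) = -τ(Δ,s)` -/
def tau : LSPD d → ℤ
  | edge _ s => if s then 1 else -1
  | series a b => a.tau * b.tau
  | parallel a b => -(a.tau * b.tau)

/-- bouquet sign `σ(Δ) = (-1)^{e(Δ)-v(Δ)+1}` (multiplicative under series,
    anti-multiplicative under parallel) -/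
def sigma : LSPD d → ℤ
  | edge _ _ => 1
  | series a b => a.sigma * b.sigma
  | parallel a b => -(a.sigma * b.sigma)

/-- volume statistic `μ`: 1 on an edge, multiplicative under series connection,
    and `μ(Δ̄) = 2^d - μ(Δ)` -/
def mu : LSPD d → ℤ
  | edge _ _ => 1
  | series a b => a.mu * b.mu
  | parallel a b =>
      2 ^ (a.numEdges + b.numEdges) - (2 ^ a.numEdges - a.mu) * (2 ^ b.numEdges - b.mu)

/-- a floral vertex on `d` half-spaces: a read-once diagram using all `d` labels -/
def IsFloral (Δ : LSPD d) : Prop := Δ.ReadOnce ∧ Δ.edges = Finset.univ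

end LSPD

variable {d : ℕ}

/-- the closed orthant of `ℝ^d` indexed by a sign vector -/
def orthant (s : Fin d → Bool) : Set (Fin d → ℝ) :=
  {x | ∀ i, if s i then 0 ≤ x i else x i ≤ 0}

/-- the sign `(-1)^s` of an orthant -/
def orthSign (s : Fin d → Bool) : ℤ := ∏ i, (if s i then 1 else -1)

/-- the orthants occupied by (i.e. contained in) a subset of `ℝ^d` -/
def occ (α : Set (Fin d → ℝ)) : Set (Fin d → Bool) := {s | orthant s ⊆ α}

/-- a local orthotopal arrangement: a union of closed orthants -/
def IsLocalArrangement (α : Set (Fin d → ℝ)) : Prop :=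
  ∃ A : Finset (Fin d → Bool), α = ⋃ s ∈ A, orthant s

/-- a pure d-dimensional axis-aligned box -/
def IsBox (B : Set (Fin d → ℝ)) : Prop :=
  ∃ a b : Fin d → ℝ, (∀ i, a i < b i) ∧ B = Set.Icc a b

/-- a possibly degenerate axis-aligned box -/
def IsWeakBox (B : Set (Fin d → ℝ)) : Prop :=
  ∃ a b : Fin d → ℝ, (∀ i, a i ≤ b i) ∧ B = Set.Icc a b

/-- a pure d-dimensional orthogonal polytope: finite union of pure boxes -/
def IsOrthotope (P : Set (Fin d → ℝ)) : Prop :=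
  ∃ S : Finset (Set (Fin d → ℝ)), (∀ B ∈ S, IsBox B) ∧ P = ⋃ B ∈ S, B

/-- a finite union of (possibly degenerate) boxes -/
def IsPolybox (P : Set (Fin d → ℝ)) : Prop :=
  ∃ S : Finset (Set (Fin d → ℝ)), (∀ B ∈ S, IsWeakBox B) ∧ P = ⋃ B ∈ S, B

/-- `α` is the tangent cone of `P` at `v`:
    `P ∩ (v + [-δ,δ]^d) = v + (α ∩ [-δ,δ]^d)` for some `δ > 0` -/
def IsTangentCone (P : Set (Fin d → ℝ)) (v : Fin d → ℝ) (α : Set (Fin d → ℝ)) : Prop :=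
  ∃ δ : ℝ, 0 < δ ∧
    P ∩ Set.Icc (fun i => v i - δ) (fun i => v i + δ) =
      (fun x => v + x) '' (α ∩ Set.Icc (fun _ => -δ) (fun _ => δ))

/-- a vertex (singular point) of `P`: a boundary point whose tangent cone is
    invariant under translation in no coordinate direction -/
def IsVertex (P : Set (Fin d → ℝ)) (v : Fin d → ℝ) : Prop :=
  v ∈ P ∧ v ∈ frontier P ∧ ∃ α, IsTangentCone P v α ∧
    ∀ i : Fin d, ∃ t : ℝ, (fun x : Fin d → ℝ => x + t • (Pi.single i 1 : Fin d → ℝ)) '' α ≠ α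

/-- a generic orthotope: an orthogonal polytope all of whose singular points
    are floral vertices on `d` half-spaces -/
def IsGenericOrthotope (P : Set (Fin d → ℝ)) : Prop :=
  IsOrthotope P ∧ ∀ v, IsVertex P v → ∃ Δ : LSPD d, Δ.IsFloral ∧ IsTangentCone P v Δ.toSet

/-- number of vertices of `P` whose tangent cone occupies exactly `k` orthants -/
noncomputable def vertexOccCount (P : Set (Fin d → ℝ)) (k : ℕ) : ℕ :=
  Set.ncard {v | IsVertex P v ∧ ∃ α, IsTangentCone P v α ∧ (occ α).ncard = k}

/-- an edge of the 1-skeleton: a segment parallel to a coordinate axis joining two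
    vertices, whose relative interior points share a common tangent cone -/
def IsEdge (P : Set (Fin d → ℝ)) (v w : Fin d → ℝ) : Prop :=
  IsVertex P v ∧ IsVertex P w ∧ v ≠ w ∧ (∃ i : Fin d, ∀ j, j ≠ i → v j = w j) ∧
    ∃ α, ∀ u ∈ segment ℝ v w, u ≠ v → u ≠ w → IsTangentCone P u α

/-- the axis-aligned hyperplane `x_i = lam` supports `P`: it contains a facet of `P`,
    i.e. some boundary point has a neighborhood whose boundary lies in the hyperplane -/
def IsSupportingHyperplane (P : Set (Fin d → ℝ)) (i : Fin d) (lam : ℝ) : Prop :=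
  ∃ x ∈ frontier P, x i = lam ∧ ∃ δ : ℝ, 0 < δ ∧
    ∀ y ∈ frontier P, (∀ j, |y j - x j| ≤ δ) → y i = lam

/-- an integral orthotope (pure d-dimensional): a finite union of lattice unit cubes -/
def IsIntegralOrthotope (P : Set (Fin d → ℝ)) : Prop :=
  ∃ S : Finset (Fin d → ℤ),
    P = ⋃ v ∈ S, Set.Icc (fun i => (v i : ℝ)) (fun i => (v i : ℝ) + 1)

/-- a rational orthotope: some positive integer multiple is integral -/
def IsRationalOrthotope (P : Set (Fin d → ℝ)) : Prop :=
  ∃ n : ℕ, 0 < n ∧ IsIntegralOrthotope ((fun x : Fin d → ℝ => (n : ℝ) • x) '' P)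

namespace FloralAux

variable {d : ℕ}

/-- boolean evaluation of the diagram on a sign vector -/
def evalB : LSPD d → (Fin d → Bool) → Bool
  | .edge i b, s => s i == b
  | .series a b, s => evalB a s && evalB b s
  | .parallel a b, s => evalB a s || evalB b s

def sgn (b : Bool) : ℤ := if b then 1 else -1

def pt (s : Fin d → Bool) : Fin d → ℝ := fun i => if s i then 1 else -1

lemma pt_mem_orthant (s : Fin d → Bool) : pt s ∈ orthant s := by
  intro i; by_cases h : s i <;> simp [pt, h]

lemma pt_mem_toSet_iff (Δ : LSPD d) (s : Fin d → Bool) :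
    pt s ∈ Δ.toSet ↔ evalB Δ s = true := by
  induction Δ with
  | edge i b =>
      cases hb : b <;> cases hs : s i <;>
        simp [LSPD.toSet, evalB, pt, hs, hb] <;> norm_num
  | series a b iha ihb =>
      simp [LSPD.toSet, evalB, Set.mem_inter_iff, iha, ihb]
  | parallel a b iha ihb =>
      simp [LSPD.toSet, evalB, Set.mem_union, iha, ihb]

lemma orthant_subset (Δ : LSPD d) (s : Fin d → Bool) (h : pt s ∈ Δ.toSet) :
    orthant s ⊆ Δ.toSet := by
  induction Δ with
  | edge i b =>
      intro x hx
      have hsb : s i = b := by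
        have := (pt_mem_toSet_iff (.edge i b) s).1 h
        simpa [evalB] using this
      have hxi := hx i
      rw [hsb] at hxi
      simpa [LSPD.toSet] using hxi
  | series a b iha ihb =>
      exact Set.subset_inter (iha h.1) (ihb h.2)
  | parallel a b iha ihb =>
      rcases h with h | h
      · exact (iha h).trans Set.subset_union_left
      · exact (ihb h).trans Set.subset_union_right

lemma occ_iff (Δ : LSPD d) (s : Fin d → Bool) :
    s ∈ occ Δ.toSet ↔ evalB Δ s = true := by
  constructor
  · intro h; exact (pt_mem_toSet_iff Δ s).1 (h (pt_mem_orthant s))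
  · intro h; exact orthant_subset Δ s ((pt_mem_toSet_iff Δ s).2 h)

lemma evalB_congr (Δ : LSPD d) {s t : Fin d → Bool}
    (h : ∀ i ∈ Δ.edges, s i = t i) : evalB Δ s = evalB Δ t := by
  induction Δ with
  | edge i b => simp [evalB, h i (by simp [LSPD.edges])]
  | series a b iha ihb =>
      have ha := iha (fun i hi => h i (by simp [LSPD.edges, hi]))
      have hb := ihb (fun i hi => h i (by simp [LSPD.edges, hi]))
      simp [evalB, ha, hb]
  | parallel a b iha ihb =>
      have ha := iha (fun i hi => h i (by simp [LSPD.edges, hi]))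
      have hb := ihb (fun i hi => h i (by simp [LSPD.edges, hi]))
      simp [evalB, ha, hb]

lemma edges_nonempty (Δ : LSPD d) : Δ.edges.Nonempty := by
  induction Δ with
  | edge i b => exact ⟨i, by simp [LSPD.edges]⟩
  | series a b iha _ =>
      obtain ⟨i, hi⟩ := iha
      exact ⟨i, by simp [LSPD.edges, hi]⟩
  | parallel a b iha _ =>
      obtain ⟨i, hi⟩ := iha
      exact ⟨i, by simp [LSPD.edges, hi]⟩

/-- flip a coordinate -/
def flip (j : Fin d) (s : Fin d → Bool) : Fin d → Bool := Function.update s j (!s j)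

lemma flip_involutive (j : Fin d) : Function.Involutive (flip j) := by
  intro s; funext i
  by_cases h : i = j
  · subst h; simp [flip]
  · simp [flip, Function.update_of_ne h]

lemma prod_sgn_flip {E : Finset (Fin d)} {j : Fin d} (hj : j ∈ E) (s : Fin d → Bool) :
    ∏ i ∈ E, sgn (flip j s i) = -∏ i ∈ E, sgn (s i) := by
  rw [← Finset.mul_prod_erase E (fun i => sgn (flip j s i)) hj,
      ← Finset.mul_prod_erase E (fun i => sgn (s i)) hj]
  have h1 : ∀ i ∈ E.erase j, sgn (flip j s i) = sgn (s i) := by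
    intro i hi
    have : i ≠ j := Finset.ne_of_mem_erase hi
    simp [flip, Function.update_of_ne this]
  rw [Finset.prod_congr rfl h1]
  have h2 : sgn (flip j s j) = -sgn (s j) := by
    cases hs : s j <;> simp [flip, sgn, hs]
  rw [h2]; ring

lemma sum_flip (j : Fin d) (f : (Fin d → Bool) → ℤ) :
    ∑ s : Fin d → Bool, f (flip j s) = ∑ s : Fin d → Bool, f s := by
  have := Equiv.sum_comp (Function.Involutive.toPerm _ (flip_involutive j)) f
  simpa [Function.Involutive.coe_toPerm] using this

lemma sum_prod_sgn_eq_zero {E : Finset (Fin d)} (hE : E.Nonempty) :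
    ∑ s : Fin d → Bool, ∏ i ∈ E, sgn (s i) = 0 := by
  obtain ⟨j, hj⟩ := hE
  have h1 := sum_flip j (fun s => ∏ i ∈ E, sgn (s i))
  have h2 : ∑ s : Fin d → Bool, ∏ i ∈ E, sgn (flip j s i)
      = ∑ s : Fin d → Bool, -∏ i ∈ E, sgn (s i) :=
    Finset.sum_congr rfl fun s _ => prod_sgn_flip hj s
  rw [Finset.sum_neg_distrib] at h2
  linarith

def merge (A : Finset (Fin d)) (s t : Fin d → Bool) : Fin d → Bool :=
  fun i => if i ∈ A then s i else t i

lemma prodlem (A : Finset (Fin d)) (f g : (Fin d → Bool) → ℤ)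
    (hf : ∀ s t : Fin d → Bool, (∀ i ∈ A, s i = t i) → f s = f t)
    (hg : ∀ s t : Fin d → Bool, (∀ i ∉ A, s i = t i) → g s = g t) :
    (∑ s : Fin d → Bool, f s) * (∑ s : Fin d → Bool, g s)
      = 2 ^ d * ∑ s : Fin d → Bool, f s * g s := by
  classical
  have hinv : Function.Involutive
      (fun p : (Fin d → Bool) × (Fin d → Bool) => (merge A p.1 p.2, merge A p.2 p.1)) := by
    rintro ⟨s, t⟩
    simp only [Prod.mk.injEq]
    constructor <;> (funext i; by_cases hi : i ∈ A <;> simp [merge, hi])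
  have hc : ∀ p : (Fin d → Bool) × (Fin d → Bool),
      f (merge A p.1 p.2) * g (merge A p.2 p.1) = f p.1 * g p.1 := by
    intro p
    rw [hf (merge A p.1 p.2) p.1 (fun i hi => by simp [merge, hi]),
        hg (merge A p.2 p.1) p.1 (fun i hi => by simp [merge, hi])]
  have h1 : ∑ p : (Fin d → Bool) × (Fin d → Bool), f p.1 * g p.2
      = ∑ p : (Fin d → Bool) × (Fin d → Bool), f p.1 * g p.1 := by
    rw [← Equiv.sum_comp (Function.Involutive.toPerm _ hinv)
          (fun p : (Fin d → Bool) × (Fin d → Bool) => f p.1 * g p.2)]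
    simp only [Function.Involutive.coe_toPerm]
    exact Finset.sum_congr rfl fun p _ => hc p
  calc (∑ s : Fin d → Bool, f s) * (∑ s : Fin d → Bool, g s)
      = ∑ p : (Fin d → Bool) × (Fin d → Bool), f p.1 * g p.2 := by
        rw [Finset.sum_mul_sum, ← Fintype.sum_prod_type']
    _ = ∑ p : (Fin d → Bool) × (Fin d → Bool), f p.1 * g p.1 := h1
    _ = ∑ s : Fin d → Bool, ∑ _t : Fin d → Bool, f s * g s := by
        rw [← Fintype.sum_prod_type']
    _ = 2 ^ d * ∑ s : Fin d → Bool, f s * g s := by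
        simp only [Finset.sum_const, Finset.card_univ, nsmul_eq_mul]
        rw [← Finset.mul_sum]
        norm_num [Fintype.card_fun]

/-- the summand -/
def F (Δ : LSPD d) (s : Fin d → Bool) : ℤ :=
  (if evalB Δ s then 1 else 0) * ∏ i ∈ Δ.edges, sgn (s i)

lemma F_congr (Δ : LSPD d) (s t : Fin d → Bool)
    (h : ∀ i ∈ Δ.edges, s i = t i) : F Δ s = F Δ t := by
  unfold F
  rw [evalB_congr Δ h, Finset.prod_congr rfl (fun i hi => by rw [h i hi])]

def P (E : Finset (Fin d)) (s : Fin d → Bool) : ℤ := ∏ i ∈ E, sgn (s i)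

lemma P_congr (E : Finset (Fin d)) (s t : Fin d → Bool)
    (h : ∀ i ∈ E, s i = t i) : P E s = P E t :=
  Finset.prod_congr rfl (fun i hi => by rw [h i hi])

lemma cross (A B : Finset (Fin d)) (hd : Disjoint A B)
    (f g : (Fin d → Bool) → ℤ)
    (hf : ∀ s t : Fin d → Bool, (∀ i ∈ A, s i = t i) → f s = f t)
    (hg : ∀ s t : Fin d → Bool, (∀ i ∈ B, s i = t i) → g s = g t)
    (x y : ℤ)
    (hx : 2 ^ A.card * ∑ s : Fin d → Bool, f s = 2 ^ d * x)
    (hy : 2 ^ B.card * ∑ s : Fin d → Bool, g s = 2 ^ d * y) :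
    2 ^ (A.card + B.card) * ∑ s : Fin d → Bool, f s * g s = 2 ^ d * (x * y) := by
  have hg' : ∀ s t : Fin d → Bool, (∀ i ∉ A, s i = t i) → g s = g t := fun s t h =>
    hg s t (fun i hi => h i (Finset.disjoint_right.mp hd hi))
  have hp := prodlem A f g hf hg'
  have h2 : (2 : ℤ) ^ d ≠ 0 := pow_ne_zero _ two_ne_zero
  apply mul_left_cancel₀ h2
  calc (2:ℤ) ^ d * (2 ^ (A.card + B.card) * ∑ s : Fin d → Bool, f s * g s)
      = 2 ^ (A.card + B.card) * (2 ^ d * ∑ s : Fin d → Bool, f s * g s) := by ring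
    _ = 2 ^ (A.card + B.card) * ((∑ s : Fin d → Bool, f s) * (∑ s : Fin d → Bool, g s)) := by
        rw [hp]
    _ = (2 ^ A.card * ∑ s : Fin d → Bool, f s) * (2 ^ B.card * ∑ s : Fin d → Bool, g s) := by
        rw [pow_add]; ring
    _ = (2 ^ d * x) * (2 ^ d * y) := by rw [hx, hy]
    _ = 2 ^ d * (2 ^ d * (x * y)) := by ring

lemma main (Δ : LSPD d) (h : Δ.ReadOnce) :
    (2 : ℤ) ^ Δ.edges.card * ∑ s : Fin d → Bool, F Δ s = 2 ^ d * Δ.tau := by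
  induction Δ with
  | edge i b =>
      have hsum : ∀ s : Fin d → Bool,
          F (.edge i b) s + F (.edge i b) (flip i s) = sgn b := by
        intro s
        have hfi : flip i s i = !s i := by simp [flip]
        simp only [F, evalB, LSPD.edges, Finset.prod_singleton, hfi]
        rcases Bool.dichotomy b with hb | hb <;> rcases Bool.dichotomy (s i) with hs | hs <;>
          simp [sgn, hs, hb]
      have hflip := sum_flip i (F (.edge i b))
      have htot : ∑ s : Fin d → Bool, (F (.edge i b) s + F (.edge i b) (flip i s))
          = ∑ s : Fin d → Bool, sgn b := Finset.sum_congr rfl fun s _ => hsum s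
      rw [Finset.sum_add_distrib, hflip] at htot
      have hconst : ∑ _s : Fin d → Bool, sgn b = 2 ^ d * sgn b := by
        simp only [Finset.sum_const, Finset.card_univ, nsmul_eq_mul]
        norm_num [Fintype.card_fun]
      rw [hconst] at htot
      have hcard : (LSPD.edge i b : LSPD d).edges.card = 1 := by
        simp [LSPD.edges]
      have htau : (LSPD.edge i b : LSPD d).tau = sgn b := rfl
      rw [hcard, htau, pow_one]
      linarith
  | series a b iha ihb =>
      obtain ⟨ha, hb, hab⟩ := h
      have hpt : ∀ s : Fin d → Bool, F (.series a b) s = F a s * F b s := by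
        intro s
        simp only [F, evalB, LSPD.edges, Finset.prod_union hab]
        rcases Bool.dichotomy (evalB a s) with h1 | h1 <;>
          rcases Bool.dichotomy (evalB b s) with h2 | h2 <;> simp [h1, h2] <;> ring
      have hcard : (LSPD.series a b).edges.card = a.edges.card + b.edges.card := by
        simp [LSPD.edges, Finset.card_union_of_disjoint hab]
      rw [hcard, Finset.sum_congr rfl fun s _ => hpt s]
      exact cross a.edges b.edges hab (F a) (F b) (F_congr a) (F_congr b)
        a.tau b.tau (iha ha) (ihb hb)
  | parallel a b iha ihb =>
      obtain ⟨ha, hb, hab⟩ := h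
      have hpt : ∀ s : Fin d → Bool,
          F (.parallel a b) s = F a s * P b.edges s + P a.edges s * F b s - F a s * F b s := by
        intro s
        simp only [F, P, evalB, LSPD.edges, Finset.prod_union hab]
        rcases Bool.dichotomy (evalB a s) with h1 | h1 <;>
          rcases Bool.dichotomy (evalB b s) with h2 | h2 <;> simp [h1, h2] <;> ring
      have hT1 : ∑ s : Fin d → Bool, F a s * P b.edges s = 0 := by
        have hPb : ∀ s t : Fin d → Bool, (∀ i ∉ a.edges, s i = t i) → P b.edges s = P b.edges t :=
          fun s t hst => P_congr b.edges s t
            (fun i hi => hst i (Finset.disjoint_right.mp hab hi))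
        have := prodlem a.edges (F a) (P b.edges) (F_congr a) hPb
        rw [show ∑ s : Fin d → Bool, P b.edges s = 0 from
              sum_prod_sgn_eq_zero (edges_nonempty b), mul_zero] at this
        have h2 : (2 : ℤ) ^ d ≠ 0 := pow_ne_zero _ two_ne_zero
        exact (mul_left_cancel₀ h2 (by rw [← this]; ring)).symm
      have hT2 : ∑ s : Fin d → Bool, P a.edges s * F b s = 0 := by
        have hFb : ∀ s t : Fin d → Bool, (∀ i ∉ a.edges, s i = t i) → F b s = F b t :=
          fun s t hst => F_congr b s t
            (fun i hi => hst i (Finset.disjoint_right.mp hab hi))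
        have := prodlem a.edges (P a.edges) (F b) (P_congr a.edges) hFb
        rw [show ∑ s : Fin d → Bool, P a.edges s = 0 from
              sum_prod_sgn_eq_zero (edges_nonempty a), zero_mul] at this
        have h2 : (2 : ℤ) ^ d ≠ 0 := pow_ne_zero _ two_ne_zero
        exact (mul_left_cancel₀ h2 (by rw [← this]; ring)).symm
      have hT3 : 2 ^ (a.edges.card + b.edges.card) * ∑ s : Fin d → Bool, F a s * F b s
          = 2 ^ d * (a.tau * b.tau) :=
        cross a.edges b.edges hab (F a) (F b) (F_congr a) (F_congr b)
          a.tau b.tau (iha ha) (ihb hb)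
      have hcard : (LSPD.parallel a b).edges.card = a.edges.card + b.edges.card := by
        simp [LSPD.edges, Finset.card_union_of_disjoint hab]
      have hsumeq : ∑ s : Fin d → Bool, F (.parallel a b) s
          = -∑ s : Fin d → Bool, F a s * F b s := by
        rw [Finset.sum_congr rfl fun s _ => hpt s]
        rw [Finset.sum_sub_distrib, Finset.sum_add_distrib, hT1, hT2]
        ring
      rw [hcard, hsumeq]
      have : (LSPD.parallel a b).tau = -(a.tau * b.tau) := rfl
      rw [this]
      linarith [hT3]

end FloralAux

open FloralAux in

/-- for a floral arrangement determined by a signed read-once diagram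
    with k edges, the signed orthant count τ_d equals τ(Δ,s) if k = d and 0 if k < d. -/
theorem floral_signed_orthant_count {d : ℕ} (Δ : LSPD d) (h : Δ.ReadOnce) :
    (∑ᶠ s ∈ occ Δ.toSet, orthSign s) = if Δ.edges.card = d then Δ.tau else 0 := by
  classical
  have hocc : occ Δ.toSet = ↑(Finset.univ.filter fun s : Fin d → Bool => evalB Δ s = true) := by
    ext s; simp [occ_iff]
  rw [hocc, finsum_mem_coe_finset, Finset.sum_filter]
  by_cases hcard : Δ.edges.card = d
  · rw [if_pos hcard]
    have huniv : Δ.edges = Finset.univ :=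
      Finset.eq_univ_of_card _ (hcard.trans (Fintype.card_fin d).symm)
    have hF : ∑ s : Fin d → Bool, F Δ s = Δ.tau := by
      have hm := main Δ h
      rw [hcard] at hm
      exact mul_left_cancel₀ (pow_ne_zero d (two_ne_zero)) hm
    rw [← hF]
    apply Finset.sum_congr rfl
    intro s _
    cases hEv : evalB Δ s <;> simp [F, hEv, orthSign, sgn, huniv]
  · rw [if_neg hcard]
    have hne : Δ.edges ≠ Finset.univ := fun he => hcard (by rw [he]; simp)
    obtain ⟨j, hj⟩ : ∃ j, j ∉ Δ.edges := by
      by_contra hc; push_neg at hc; exact hne (Finset.eq_univ_iff_forall.mpr hc)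
    set f : (Fin d → Bool) → ℤ := fun s => if evalB Δ s then orthSign s else 0 with hf
    have hneg : ∀ s, f (FloralAux.flip j s) = -f s := by
      intro s
      have he : evalB Δ (FloralAux.flip j s) = evalB Δ s :=
        evalB_congr Δ (fun i hi => by
          have hij : i ≠ j := fun h' => hj (h' ▸ hi)
          simp [FloralAux.flip, Function.update_of_ne hij])
      have ho : orthSign (FloralAux.flip j s) = -orthSign s := by
        have := prod_sgn_flip (Finset.mem_univ j) s
        simpa [orthSign, sgn] using this
      simp only [hf, he, ho]
      cases evalB Δ s <;> simp
    have h1 := sum_flip j f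
    have h2 : ∑ s : Fin d → Bool, f (FloralAux.flip j s) = -∑ s : Fin d → Bool, f s := by
      rw [Finset.sum_congr rfl fun s _ => hneg s, Finset.sum_neg_distrib]
    have : ∑ s : Fin d → Bool, f s = 0 := by linarith
    simpa [hf] using this
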